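/- If X ⊆ ℝ^d is convex with diameter at most D_X and ‖∇F(x)‖ ≤ L for all x ∈ X, then the Frank-Wolfe gap is bounded by (L/β + D_X) times the norm of the gradient mapping: g_X(x, ∇F(x)) ≤ (L/β + D_X)·‖G_X(x, ∇F(x), β)‖ for all x ∈ X. -/

import Mathlib

open scoped RealInnerProductSpace BigOperators

set_option maxHeartbeats 1000000

noncomputable section

/-- If `X ⊆ ℝ^d` is convex with diameter at most `D` and `‖∇F(y)‖ ≤ L` for all
`y ∈ X`, then the Frank-Wolfe gap is bounded as
`g_X(x, ∇F(x)) ≤ (L/β + D)·‖G_X(x, ∇F(x), β)‖` for all `x ∈ X`. -/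
theorem stmt2 {n : ℕ} (X : Set (EuclideanSpace ℝ (Fin n)))
    (hXne : X.Nonempty) (hXcp : IsCompact X) (hXconv : Convex ℝ X)
    (D : ℝ) (hD : ∀ a ∈ X, ∀ b ∈ X, ‖a - b‖ ≤ D)
    (β : ℝ) (hβ : 0 < β)
    (F : EuclideanSpace ℝ (Fin n) → ℝ) (hF : Differentiable ℝ F)
    (L : ℝ) (hL : ∀ y ∈ X, ‖gradient F y‖ ≤ L)
    (x : EuclideanSpace ℝ (Fin n)) (hx : x ∈ X)
    (p : EuclideanSpace ℝ (Fin n)) (hp : p ∈ X)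
    (hproj : ∀ y ∈ X, ‖x - β⁻¹ • gradient F x - p‖ ≤ ‖x - β⁻¹ • gradient F x - y‖) :
    sSup ((fun y => ⟪gradient F x, x - y⟫) '' X) ≤ (L / β + D) * ‖β • (x - p)‖ := by
  set g := gradient F x with hg
  have hD0 : 0 ≤ D := le_trans (by simp) (hD x hx x hx)
  have hL0 : 0 ≤ L := le_trans (norm_nonneg _) (hL x hx)
  have hnorm : ‖β • (x - p)‖ = β * ‖x - p‖ := by
    rw [norm_smul, Real.norm_eq_abs, abs_of_pos hβ]
  have hbound : 0 ≤ (L / β + D) * ‖β • (x - p)‖ :=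
    mul_nonneg (by positivity) (norm_nonneg _)
  apply Real.sSup_le _ hbound
  rintro v ⟨y, hy, rfl⟩
  show ⟪g, x - y⟫ ≤ (L / β + D) * ‖β • (x - p)‖
  have hne : Nonempty X := hXne.to_subtype
  have hinf : ‖(x - β⁻¹ • g) - p‖ = ⨅ w : X, ‖(x - β⁻¹ • g) - w‖ := by
    apply le_antisymm
    · exact le_ciInf fun w => hproj w w.2
    · have hbdd : BddBelow (Set.range fun w : X => ‖(x - β⁻¹ • g) - w‖) :=
        ⟨0, by rintro b ⟨w, rfl⟩; exact norm_nonneg _⟩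
      exact ciInf_le hbdd ⟨p, hp⟩
  have hvi := (norm_eq_iInf_iff_real_inner_le_zero hXconv hp).mp hinf y hy
  have hvi' : ⟪x - p, y - p⟫ - β⁻¹ * ⟪g, y - p⟫ ≤ 0 := by
    have : (x - β⁻¹ • g) - p = (x - p) - β⁻¹ • g := by abel
    rw [this, inner_sub_left, real_inner_smul_left] at hvi
    linarith
  have hsplit : ⟪g, x - y⟫ = ⟪g, x - p⟫ + ⟪g, p - y⟫ := by
    rw [← inner_add_right]; congr 1; abel
  have h1 : ⟪g, x - p⟫ ≤ L * ‖x - p‖ :=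
    le_trans (real_inner_le_norm g (x - p))
      (mul_le_mul_of_nonneg_right (hL x hx) (norm_nonneg _))
  have h2 : ⟪g, p - y⟫ ≤ β * (‖x - p‖ * D) := by
    have hgyp : β * ⟪x - p, y - p⟫ ≤ ⟪g, y - p⟫ := by
      have := mul_le_mul_of_nonneg_left hvi' hβ.le
      rw [mul_sub] at this
      have hb : β * (β⁻¹ * ⟪g, y - p⟫) = ⟪g, y - p⟫ := by
        field_simp
      linarith [this, hb ▸ this]
    have hpy : ⟪g, p - y⟫ = -⟪g, y - p⟫ := by
      rw [← inner_neg_right]; congr 1; abel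
    have hcs : ⟪x - p, p - y⟫ ≤ ‖x - p‖ * ‖p - y‖ := real_inner_le_norm _ _
    have hxy : ⟪x - p, p - y⟫ = -⟪x - p, y - p⟫ := by
      rw [← inner_neg_right]; congr 1; abel
    have hpyD : ‖p - y‖ ≤ D := hD p hp y hy
    have e1 : β * ⟪x - p, p - y⟫ = -(β * ⟪x - p, y - p⟫) := by rw [hxy]; ring
    linarith [mul_le_mul_of_nonneg_left hcs hβ.le,
      mul_le_mul_of_nonneg_left (mul_le_mul_of_nonneg_left hpyD (norm_nonneg (x - p))) hβ.le]
  have hβne : β ≠ 0 := hβ.ne'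
  rw [hsplit, hnorm]
  have : (L / β + D) * (β * ‖x - p‖) = L * ‖x - p‖ + β * (‖x - p‖ * D) := by
    field_simp
  linarith
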